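/- Let a_1,…,a_n be positive integers with Σ_i a_i = 2T, each a_i ≤ T, and let 0 < ε < 1. Consider the interval scheduling game with horizon T and c = 2 in which S_1 consists of n jobs, the i-th of length a_i and weight 1, together with one additional job of length T and weight 1 + ε, and S_2 consists of a single job of length 1/n and weight 3. Then for every tie-breaking rule M, this game has a Nash equilibrium with respect to M if and only if there exists a subset A' ⊆ {1,…,n} with Σ_{i∈A'} a_i = T. -/

import Mathlib

open Classical

/-- An interval scheduling game: jobs `Fin n`, colors `Fin c`, horizon `[0, T)`,
and for each job a color, a length and a weight. -/
structure Game where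
  n : ℕ
  c : ℕ
  T : ℝ
  T_pos : 0 < T
  color : Fin n → Fin c
  len : Fin n → ℝ
  wt : Fin n → ℝ
  len_nonneg : ∀ j, 0 ≤ len j
  len_le_T : ∀ j, len j ≤ T
  wt_nonneg : ∀ j, 0 ≤ wt j

/-- A strategy profile assigns a feasible start time to every job, so that job `j`
occupies `[start j, start j + len j) ⊆ [0, T)`. -/
structure Game.Profile (G : Game) where
  start : Fin G.n → ℝ
  start_nonneg : ∀ j, 0 ≤ start j
  start_le : ∀ j, start j + G.len j ≤ G.T

/-- A machine configuration assigns a color to every time point. -/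
abbrev Game.Config (G : Game) : Type := ℝ → Fin G.c

/-- Job `j` is covered if the machine is configured to its color throughout its
processing interval `[start j, start j + len j)`. -/
def Game.Covered (G : Game) (s : G.Profile) (γ : G.Config) (j : Fin G.n) : Prop :=
  ∀ t : ℝ, s.start j ≤ t → t < s.start j + G.len j → γ t = G.color j

/-- The profit of a configuration: total weight of covered jobs. -/
noncomputable def Game.profit (G : Game) (s : G.Profile) (γ : G.Config) : ℝ :=
  ∑ j : Fin G.n, if G.Covered s γ j then G.wt j else 0

/-- The value of a profile: the maximal profit over machine configurations. -/
noncomputable def Game.val (G : Game) (s : G.Profile) : ℝ :=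
  sSup {x : ℝ | ∃ γ : G.Config, x = G.profit s γ}

/-- The social optimum value: the maximal value over strategy profiles. -/
noncomputable def Game.valOPT (G : Game) : ℝ :=
  sSup {x : ℝ | ∃ s : G.Profile, x = G.val s}

/-- A tie-breaking rule selects, for every profile, a configuration of maximal profit. -/
structure Game.TieBreak (G : Game) where
  choice : G.Profile → G.Config
  choice_opt : ∀ s : G.Profile, G.profit s (choice s) = G.val s

/-- Utility of player `i` under tie-breaking rule `M`: total weight of covered jobs
of color `i`. -/
noncomputable def Game.utility (G : Game) (M : G.TieBreak) (i : Fin G.c) (s : G.Profile) : ℝ :=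
  ∑ j : Fin G.n, if G.color j = i ∧ G.Covered s (M.choice s) j then G.wt j else 0

/-- Nash equilibrium with respect to tie-breaking rule `M`: no player can strictly
increase its utility by relocating only the jobs of its own color. -/
def Game.IsNE (G : Game) (M : G.TieBreak) (s : G.Profile) : Prop :=
  ∀ (i : Fin G.c) (s' : G.Profile),
    (∀ j, G.color j ≠ i → s'.start j = s.start j) →
      G.utility M i s' ≤ G.utility M i s

/-- The class `G_single`: exactly one job of each color (`n = c`). -/
def Game.Single (G : Game) : Prop := Function.Bijective G.color

open Classical Finset


section Split
variable {ι : Type*} [DecidableEq ι]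

structure SSt (ι : Type*) where
  al : ℤ
  bt : ℤ
  A : Finset ι
  B : Finset ι

variable (lo hi : ι → ℤ) (F : Finset ι) (m : ℤ)

def sstep (st : SSt ι) (x : ι) : SSt ι :=
  if st.al ≤ st.bt then ⟨max st.al (hi x), st.bt, insert x st.A, st.B⟩
  else ⟨st.al, max st.bt (hi x), st.A, insert x st.B⟩

structure SInv (st : SSt ι) (rem : List ι) : Prop where
  h1a : ∀ i ∈ st.A, hi i ≤ st.al
  h1b : ∀ i ∈ st.B, hi i ≤ st.bt
  h2 : ∀ i ∈ st.A ∪ st.B, ∀ j ∈ st.A ∪ st.B, i ≠ j → min (hi i) (hi j) ≤ min st.al st.bt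
  h3a : ∀ k : ℤ, 0 ≤ k → k ≤ st.al → ∃ i ∈ st.A, lo i ≤ k ∧ k ≤ hi i
  h3b : ∀ k : ℤ, 0 ≤ k → k ≤ st.bt → ∃ i ∈ st.B, lo i ≤ k ∧ k ≤ hi i
  h4 : st.A ∪ st.B ∪ rem.toFinset = F
  h5 : ∀ i ∈ st.A, i ∉ st.B
  h6 : ∀ i ∈ rem, i ∉ st.A ∧ i ∉ st.B
  h7 : rem.Nodup
  h8 : rem.Pairwise (fun i j => lo i ≤ lo j)
  h9a : -1 ≤ st.al
  h9b : -1 ≤ st.bt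

variable {lo hi F m}
variable (hhi : ∀ i ∈ F, hi i ≤ m - 1) (hlh : ∀ i ∈ F, lo i ≤ hi i)
  (hcov : ∀ k : ℤ, 0 ≤ k → k ≤ m - 1 →
    ∃ i ∈ F, ∃ j ∈ F, i ≠ j ∧ (lo i ≤ k ∧ k ≤ hi i) ∧ (lo j ≤ k ∧ k ≤ hi j))

include hhi hlh hcov

theorem sstep_inv (st : SSt ι) (x : ι) (rem : List ι) (H : SInv lo hi F st (x :: rem)) :
    SInv lo hi F (sstep hi st x) rem := by
  have hxF : x ∈ F := by rw [← H.h4]; simp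
  have hfront : lo x - 1 ≤ min st.al st.bt := by
    rcases le_or_gt (lo x) 0 with h0 | h0
    · have := H.h9a; have := H.h9b; omega
    · have hc1 : lo x - 1 ≤ m - 1 := by
        have := hhi x hxF; have := hlh x hxF; omega
      obtain ⟨i, hiF, j, hjF, hij, ⟨hi1, hi2⟩, ⟨hj1, hj2⟩⟩ := hcov (lo x - 1) (by omega) hc1
      have hproc : ∀ y ∈ F, lo y ≤ lo x - 1 → y ∈ st.A ∪ st.B := by
        intro y hyF hy
        have : y ∈ st.A ∪ st.B ∪ (x :: rem).toFinset := by rw [H.h4]; exact hyF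
        rcases Finset.mem_union.1 this with h | h
        · exact h
        · exfalso
          simp only [List.toFinset_cons, Finset.mem_insert, List.mem_toFinset] at h
          rcases h with rfl | h
          · omega
          · have := (List.pairwise_cons.1 H.h8).1 y h; omega
      have h2 := H.h2 i (hproc i hiF hi1) j (hproc j hjF hj1) hij
      omega
  have hxA : x ∉ st.A := (H.h6 x (by simp)).1
  have hxB : x ∉ st.B := (H.h6 x (by simp)).2
  rcases le_or_gt st.al st.bt with hab | hab
  · have hst : sstep hi st x = ⟨max st.al (hi x), st.bt, insert x st.A, st.B⟩ := by
      unfold sstep; rw [if_pos hab]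
    rw [hst]
    constructor
    · intro i hi'
      rcases Finset.mem_insert.1 hi' with rfl | hi'
      · exact le_max_right _ _
      · exact le_trans (H.h1a i hi') (le_max_left _ _)
    · exact fun i h => H.h1b i h
    · intro i hi' j hj' hij
      have key : ∀ y, y ∈ insert x st.A ∪ st.B → y = x ∨ y ∈ st.A ∪ st.B := by
        intro y hy
        rcases Finset.mem_union.1 hy with h | h
        · rcases Finset.mem_insert.1 h with h | h
          · exact Or.inl h
          · exact Or.inr (Finset.mem_union_left _ h)
        · exact Or.inr (Finset.mem_union_right _ h)
      have hbnd : ∀ y, y ∈ st.A ∪ st.B → hi y ≤ st.bt := by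
        intro y hy
        rcases Finset.mem_union.1 hy with h | h
        · exact le_trans (H.h1a y h) hab
        · exact H.h1b y h
      rcases key i hi' with rfl | hiold
      · rcases key j hj' with rfl | hjold
        · exact absurd rfl hij
        · have := hbnd j hjold; simp only []; omega
      · rcases key j hj' with rfl | hjold
        · have := hbnd i hiold; simp only []; omega
        · have := H.h2 i hiold j hjold hij; simp only []; omega
    · intro k hk0 hk
      simp only [] at hk
      rcases le_or_gt k st.al with h | h
      · obtain ⟨i, hiA, hi1, hi2⟩ := H.h3a k hk0 h
        exact ⟨i, Finset.mem_insert_of_mem hiA, hi1, hi2⟩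
      · refine ⟨x, Finset.mem_insert_self _ _, ?_, ?_⟩ <;> omega
    · exact H.h3b
    · rw [← H.h4]; ext y
      simp only [Finset.mem_union, Finset.mem_insert, List.toFinset_cons, List.mem_toFinset]
      tauto
    · intro i hi'
      rcases Finset.mem_insert.1 hi' with rfl | hi'
      · exact hxB
      · exact H.h5 i hi'
    · intro i hirem
      have hi' := H.h6 i (by simp [hirem])
      have : i ≠ x := by
        rintro rfl; exact (List.nodup_cons.1 H.h7).1 hirem
      simp [this, hi'.1, hi'.2]
    · exact (List.nodup_cons.1 H.h7).2
    · exact (List.pairwise_cons.1 H.h8).2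
    · simp only []; have := H.h9a; omega
    · exact H.h9b
  · have hst : sstep hi st x = ⟨st.al, max st.bt (hi x), st.A, insert x st.B⟩ := by
      unfold sstep; rw [if_neg (not_le.2 hab)]
    rw [hst]
    constructor
    · exact fun i h => H.h1a i h
    · intro i hi'
      rcases Finset.mem_insert.1 hi' with rfl | hi'
      · exact le_max_right _ _
      · exact le_trans (H.h1b i hi') (le_max_left _ _)
    · intro i hi' j hj' hij
      have key : ∀ y, y ∈ st.A ∪ insert x st.B → y = x ∨ y ∈ st.A ∪ st.B := by
        intro y hy
        rcases Finset.mem_union.1 hy with h | h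
        · exact Or.inr (Finset.mem_union_left _ h)
        · rcases Finset.mem_insert.1 h with h | h
          · exact Or.inl h
          · exact Or.inr (Finset.mem_union_right _ h)
      have hbnd : ∀ y, y ∈ st.A ∪ st.B → hi y ≤ st.al := by
        intro y hy
        rcases Finset.mem_union.1 hy with h | h
        · exact H.h1a y h
        · exact le_trans (H.h1b y h) (le_of_lt hab)
      rcases key i hi' with rfl | hiold
      · rcases key j hj' with rfl | hjold
        · exact absurd rfl hij
        · have := hbnd j hjold; simp only []; omega
      · rcases key j hj' with rfl | hjold
        · have := hbnd i hiold; simp only []; omega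
        · have := H.h2 i hiold j hjold hij; simp only []; omega
    · exact H.h3a
    · intro k hk0 hk
      simp only [] at hk
      rcases le_or_gt k st.bt with h | h
      · obtain ⟨i, hiB, hi1, hi2⟩ := H.h3b k hk0 h
        exact ⟨i, Finset.mem_insert_of_mem hiB, hi1, hi2⟩
      · refine ⟨x, Finset.mem_insert_self _ _, ?_, ?_⟩ <;> omega
    · rw [← H.h4]; ext y
      simp only [Finset.mem_union, Finset.mem_insert, List.toFinset_cons, List.mem_toFinset]
      tauto
    · intro i hiA
      have : i ≠ x := by rintro rfl; exact hxA hiA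
      intro hmem
      rcases Finset.mem_insert.1 hmem with h | h
      · exact this h
      · exact H.h5 i hiA h
    · intro i hirem
      have hi' := H.h6 i (by simp [hirem])
      have : i ≠ x := by
        rintro rfl; exact (List.nodup_cons.1 H.h7).1 hirem
      simp [this, hi'.1, hi'.2]
    · exact (List.nodup_cons.1 H.h7).2
    · exact (List.pairwise_cons.1 H.h8).2
    · exact H.h9a
    · simp only []; have := H.h9b; omega

theorem sfold_inv (rem : List ι) (st : SSt ι) (H : SInv lo hi F st rem) :
    SInv lo hi F (rem.foldl (sstep hi) st) [] := by
  induction rem generalizing st with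
  | nil => exact H
  | cons x tl ih => exact ih _ (sstep_inv hhi hlh hcov st x tl H)

theorem split_lemma (hm : 1 ≤ m) (hlo : ∀ i ∈ F, 0 ≤ lo i) :
    ∃ A ⊆ F, (∀ k : ℤ, 0 ≤ k → k ≤ m - 1 → ∃ i ∈ A, lo i ≤ k ∧ k ≤ hi i) ∧
      (∀ k : ℤ, 0 ≤ k → k ≤ m - 1 → ∃ i ∈ F \ A, lo i ≤ k ∧ k ≤ hi i) := by
  classical
  obtain ⟨L, hperm, hsort⟩ : ∃ L : List ι, List.Perm L F.toList ∧
      L.Pairwise (fun i j => lo i ≤ lo j) := by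
    refine ⟨F.toList.mergeSort (fun i j => decide (lo i ≤ lo j)), List.mergeSort_perm _ _, ?_⟩
    have h := List.pairwise_mergeSort (le := fun i j : ι => decide (lo i ≤ lo j))
      (fun a b c h₁ h₂ => by simp only [decide_eq_true_eq] at *; omega)
      (fun a b => by simpa using le_total (lo a) (lo b)) (F.toList)
    simpa using h
  have hLF : L.toFinset = F := by
    ext y; simp only [List.mem_toFinset, hperm.mem_iff, Finset.mem_toList]
  have hinit : SInv lo hi F (⟨-1, -1, ∅, ∅⟩ : SSt ι) L := by
    refine ⟨?_, ?_, ?_, ?_, ?_, ?_, ?_, ?_, ?_, ?_, ?_, ?_⟩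
    · intro i h; exact absurd h (Finset.notMem_empty i)
    · intro i h; exact absurd h (Finset.notMem_empty i)
    · intro i h; simp at h
    · intro k h0 h1; have h2 : k ≤ -1 := h1; omega
    · intro k h0 h1; have h2 : k ≤ -1 := h1; omega
    · simpa using hLF
    · intro i h; exact absurd h (Finset.notMem_empty i)
    · intro i _; simp
    · exact hperm.symm.nodup (Finset.nodup_toList F)
    · exact hsort
    · exact le_refl _
    · exact le_refl _
  have Hf := sfold_inv hhi hlh hcov L _ hinit
  set st := L.foldl (sstep hi) (⟨-1, -1, ∅, ∅⟩ : SSt ι) with hstdef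
  have hAB : st.A ∪ st.B = F := by
    have h4 := Hf.h4; simpa using h4
  have hmin : m - 1 ≤ min st.al st.bt := by
    obtain ⟨i, hiF, j, hjF, hij, ⟨_, hi2⟩, ⟨_, hj2⟩⟩ := hcov (m - 1) (by omega) le_rfl
    have h2 := Hf.h2 i (by rw [hAB]; exact hiF) j (by rw [hAB]; exact hjF) hij
    omega
  refine ⟨st.A, ?_, ?_, ?_⟩
  · rw [← hAB]; exact Finset.subset_union_left
  · intro k h0 h1; exact Hf.h3a k h0 (by omega)
  · intro k h0 h1
    obtain ⟨i, hiB, p1, p2⟩ := Hf.h3b k h0 (by omega)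
    exact ⟨i, Finset.mem_sdiff.2 ⟨by rw [← hAB]; exact Finset.mem_union_right _ hiB,
      fun hA => Hf.h5 i hA hiB⟩, p1, p2⟩

end Split

section Comb

theorem comb_lemma (n T : ℕ) (hn : 2 ≤ n) (hT : 1 ≤ T) (a : Fin n → ℕ) (ha : ∀ i, 1 ≤ a i)
    (hsum : ∑ i, a i = 2 * T) (σ : Fin n → ℝ)
    (hσ0 : ∀ i, 0 ≤ σ i) (hσT : ∀ i, σ i + a i ≤ T)
    (hblock : ∀ t : ℝ, 0 ≤ t → t + 1 / n ≤ T →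
      2 ≤ (Finset.univ.filter (fun i : Fin n => t < σ i + a i ∧ σ i < t + 1 / n)).card) :
    ∃ A : Finset (Fin n), ∑ i ∈ A, a i = T := by
  classical
  have hnR : (0:ℝ) < n := by positivity
  set lo : Fin n → ℤ := fun i => ⌊(n : ℝ) * σ i⌋ with hlo_def
  set hi : Fin n → ℤ := fun i => ⌈(n : ℝ) * σ i⌉ + n * a i - 1 with hhi_def
  set m : ℤ := (n : ℤ) * T with hm_def
  have hm1 : 1 ≤ m := by
    have h : 1 * 1 ≤ n * T := Nat.mul_le_mul (by omega) hT
    have : (1:ℤ) ≤ (n:ℤ) * (T:ℤ) := by exact_mod_cast h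
    omega
  have hlo0 : ∀ i : Fin n, 0 ≤ lo i := by
    intro i
    exact Int.floor_nonneg.2 (mul_nonneg (le_of_lt hnR) (hσ0 i))
  have hhim : ∀ i : Fin n, hi i ≤ m - 1 := by
    intro i
    have h1 : (n:ℝ) * σ i ≤ ((n * T - n * a i : ℤ) : ℝ) := by
      push_cast
      nlinarith [hσT i]
    have := Int.ceil_le.2 h1
    simp only [hhi_def, hm_def]
    omega
  have hlh : ∀ i : Fin n, lo i ≤ hi i := by
    intro i
    have h1 := Int.floor_le_ceil ((n : ℝ) * σ i)
    have h2 : 1 ≤ (n:ℤ) * a i := by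
      have h : 1 * 1 ≤ n * a i := Nat.mul_le_mul (by omega) (ha i)
      exact_mod_cast h
    simp only [hlo_def, hhi_def]
    omega
  -- overlap at grid point implies cell membership
  have hcell : ∀ (k : ℤ) (i : Fin n), 0 ≤ k → k ≤ m - 1 →
      ((k : ℝ) / n < σ i + a i ∧ σ i < ((k : ℝ) + 1) / n) → lo i ≤ k ∧ k ≤ hi i := by
    intro k i hk0 hkm ⟨h1, h2⟩
    constructor
    · have : (n:ℝ) * σ i < ((k + 1 : ℤ) : ℝ) := by
        rw [lt_div_iff₀ hnR] at h2
        push_cast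
        nlinarith [h2]
      have := Int.floor_lt.2 this
      simp only [hlo_def]; omega
    · have h3 : ((k:ℤ):ℝ) < (n:ℝ) * σ i + ((n * a i : ℤ) : ℝ) := by
        rw [div_lt_iff₀ hnR] at h1
        push_cast
        nlinarith [h1]
      have h4 : k < ⌈(n:ℝ) * σ i + ((n * a i : ℤ):ℝ)⌉ := Int.lt_ceil.2 h3
      rw [Int.ceil_add_intCast] at h4
      simp only [hhi_def]
      omega
  have hcov : ∀ k : ℤ, 0 ≤ k → k ≤ m - 1 →
      ∃ i ∈ (Finset.univ : Finset (Fin n)), ∃ j ∈ (Finset.univ : Finset (Fin n)),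
        i ≠ j ∧ (lo i ≤ k ∧ k ≤ hi i) ∧ (lo j ≤ k ∧ k ≤ hi j) := by
    intro k hk0 hkm
    have hfeas1 : (0:ℝ) ≤ (k:ℝ) / n := by positivity
    have hfeas2 : (k:ℝ) / n + 1 / n ≤ T := by
      rw [← add_div, div_le_iff₀ hnR]
      have : (k:ℝ) + 1 ≤ ((m:ℤ):ℝ) := by exact_mod_cast by omega
      calc (k:ℝ) + 1 ≤ ((m:ℤ):ℝ) := this
        _ = (T:ℝ) * n := by rw [hm_def]; push_cast; ring
    have hcard := hblock ((k:ℝ)/n) hfeas1 hfeas2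
    have hcard2 : 1 < (Finset.univ.filter
        (fun i : Fin n => (k:ℝ)/n < σ i + a i ∧ σ i < (k:ℝ)/n + 1/n)).card :=
      lt_of_lt_of_le one_lt_two hcard
    obtain ⟨i, hi', j, hj', hij⟩ := Finset.one_lt_card.1 hcard2
    simp only [Finset.mem_filter] at hi' hj'
    have pi := hcell k i hk0 hkm ⟨hi'.2.1, by rw [add_div]; exact hi'.2.2⟩
    have pj := hcell k j hk0 hkm ⟨hj'.2.1, by rw [add_div]; exact hj'.2.2⟩
    exact ⟨i, Finset.mem_univ i, j, Finset.mem_univ j, hij, pi, pj⟩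
  obtain ⟨A, _, hcovA, hcovB⟩ := split_lemma (lo := lo) (hi := hi) (F := Finset.univ) (m := m)
    (fun i _ => hhim i) (fun i _ => hlh i) hcov hm1 (fun i _ => hlo0 i)
  -- counting
  have hcount : ∀ S : Finset (Fin n),
      (∀ k : ℤ, 0 ≤ k → k ≤ m - 1 → ∃ i ∈ S, lo i ≤ k ∧ k ≤ hi i) →
      S.card ≤ n - 1 → T ≤ ∑ i ∈ S, a i := by
    intro S hcovS hcard
    have hsub : Finset.Icc (0:ℤ) (m-1) ⊆ S.biUnion (fun i => Finset.Icc (lo i) (hi i)) := by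
      intro k hk
      rw [Finset.mem_Icc] at hk
      obtain ⟨i, hiS, h1, h2⟩ := hcovS k hk.1 hk.2
      exact Finset.mem_biUnion.2 ⟨i, hiS, Finset.mem_Icc.2 ⟨h1, h2⟩⟩
    have h1 : (Finset.Icc (0:ℤ) (m-1)).card = n * T := by
      rw [Int.card_Icc]
      simp only [hm_def]
      omega
    have h2 : ∀ i : Fin n, (Finset.Icc (lo i) (hi i)).card ≤ n * a i + 1 := by
      intro i
      rw [Int.card_Icc]
      have hc := Int.ceil_le_floor_add_one ((n:ℝ) * σ i)
      have : hi i + 1 - lo i ≤ (n : ℤ) * a i + 1 := by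
        simp only [hlo_def, hhi_def]; omega
      omega
    have h3 : n * T ≤ ∑ i ∈ S, (n * a i + 1) := by
      calc n * T = (Finset.Icc (0:ℤ) (m-1)).card := h1.symm
        _ ≤ (S.biUnion (fun i => Finset.Icc (lo i) (hi i))).card := Finset.card_le_card hsub
        _ ≤ ∑ i ∈ S, (Finset.Icc (lo i) (hi i)).card := Finset.card_biUnion_le
        _ ≤ ∑ i ∈ S, (n * a i + 1) := Finset.sum_le_sum (fun i _ => h2 i)
    rw [Finset.sum_add_distrib, ← Finset.mul_sum, Finset.sum_const, smul_eq_mul, mul_one] at h3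
    by_contra hlt
    push_neg at hlt
    have : (∑ i ∈ S, a i) + 1 ≤ T := hlt
    have h4 : n * ((∑ i ∈ S, a i) + 1) ≤ n * T := Nat.mul_le_mul_left n this
    have h5 : n * T ≤ n * (∑ i ∈ S, a i) + (n - 1) := le_trans h3 (by omega)
    rw [Nat.mul_add, Nat.mul_one] at h4
    omega
  -- A and its complement are both nonempty covers
  have hAne : A.Nonempty := by
    obtain ⟨i, hiA, _⟩ := hcovA 0 le_rfl (by omega)
    exact ⟨i, hiA⟩
  have hBne : (Finset.univ \ A).Nonempty := by
    obtain ⟨i, hiB, _⟩ := hcovB 0 le_rfl (by omega)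
    exact ⟨i, hiB⟩
  have hcardA : A.card ≤ n - 1 := by
    obtain ⟨i, hiB⟩ := hBne
    have : A ⊂ Finset.univ := Finset.ssubset_univ_iff.2 (by
      intro h; rw [h] at hiB; simp at hiB)
    have := Finset.card_lt_card this
    simp only [Finset.card_univ, Fintype.card_fin] at this
    omega
  have hcardB : (Finset.univ \ A).card ≤ n - 1 := by
    obtain ⟨i, hiA⟩ := hAne
    have hne : Finset.univ \ A ≠ Finset.univ := by
      intro h
      have : i ∈ Finset.univ \ A := by rw [h]; exact Finset.mem_univ i
      simp only [Finset.mem_sdiff] at this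
      exact this.2 hiA
    have : Finset.univ \ A ⊂ Finset.univ := Finset.ssubset_univ_iff.2 hne
    have := Finset.card_lt_card this
    simp only [Finset.card_univ, Fintype.card_fin] at this
    omega
  have hTA : T ≤ ∑ i ∈ A, a i := hcount A hcovA hcardA
  have hTB : T ≤ ∑ i ∈ Finset.univ \ A, a i := hcount _ hcovB hcardB
  have htot : (∑ i ∈ A, a i) + (∑ i ∈ Finset.univ \ A, a i) = 2 * T := by
    have h := Finset.sum_sdiff (f := a) (Finset.subset_univ A)
    rw [← hsum]
    omega
  exact ⟨A, by omega⟩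

end Comb

section Pack

theorem ilem (n : ℕ) (a : Fin n → ℕ) :
    ∀ (A : Finset (Fin n)) (c : ℕ), c < ∑ j ∈ A, a j →
      ∃ i ∈ A, (∑ j ∈ A.filter (· < i), a j) ≤ c ∧
        c < (∑ j ∈ A.filter (· < i), a j) + a i := by
  intro A
  induction A using Finset.strongInduction with
  | _ A IH =>
    intro c hc
    have hne : A.Nonempty := by
      rcases Finset.eq_empty_or_nonempty A with rfl | h
      · simp at hc
      · exact h
    set i0 := A.max' hne with hi0
    have hi0A : i0 ∈ A := A.max'_mem hne
    have hkey : A.filter (· < i0) = A.erase i0 := by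
      ext x
      simp only [Finset.mem_filter, Finset.mem_erase]
      constructor
      · rintro ⟨hx, hlt⟩; exact ⟨ne_of_lt hlt, hx⟩
      · rintro ⟨hne', hx⟩
        exact ⟨hx, lt_of_le_of_ne (A.le_max' x hx) hne'⟩
    have hsplit : (∑ j ∈ A.erase i0, a j) + a i0 = ∑ j ∈ A, a j :=
      Finset.sum_erase_add A a hi0A
    rcases le_or_gt (∑ j ∈ A.filter (· < i0), a j) c with hle | hlt
    · refine ⟨i0, hi0A, hle, ?_⟩
      rw [hkey]
      omega
    · rw [hkey] at hlt
      obtain ⟨i, hiE, h1, h2⟩ := IH (A.erase i0) (Finset.erase_ssubset hi0A) c hlt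
      have hii0 : i < i0 := by
        have hiA := Finset.mem_of_mem_erase hiE
        exact lt_of_le_of_ne (A.le_max' i hiA) (Finset.ne_of_mem_erase hiE)
      have hfeq : (A.erase i0).filter (· < i) = A.filter (· < i) := by
        ext x
        simp only [Finset.mem_filter, Finset.mem_erase]
        constructor
        · rintro ⟨⟨_, hx⟩, hlt'⟩; exact ⟨hx, hlt'⟩
        · rintro ⟨hx, hlt'⟩
          exact ⟨⟨by rintro rfl; exact absurd (hlt'.trans hii0) (lt_irrefl _), hx⟩, hlt'⟩
      rw [hfeq] at h1 h2
      exact ⟨i, Finset.mem_of_mem_erase hiE, h1, h2⟩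

theorem pack_lemma (n T : ℕ) (hn : 2 ≤ n) (hT : 1 ≤ T) (a : Fin n → ℕ) (ha : ∀ i, 1 ≤ a i)
    (hsum : ∑ i, a i = 2 * T) (A : Finset (Fin n)) (hA : ∑ i ∈ A, a i = T) :
    ∃ σ : Fin n → ℝ, (∀ i, 0 ≤ σ i) ∧ (∀ i, σ i + a i ≤ T) ∧
      (∀ t : ℝ, 0 ≤ t → t + 1 / n ≤ T →
        2 ≤ (Finset.univ.filter (fun i : Fin n => t < σ i + a i ∧ σ i < t + 1 / n)).card) := by
  classical
  have hnR : (0:ℝ) < n := by positivity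
  have hAc : ∑ i ∈ Finset.univ \ A, a i = T := by
    have h := Finset.sum_sdiff (f := a) (Finset.subset_univ A)
    omega
  set S : Finset (Fin n) → Fin n → ℕ := fun B i => ∑ j ∈ B.filter (· < i), a j with hS
  set σ : Fin n → ℝ := fun i => if i ∈ A then (S A i : ℝ) else (S (Finset.univ \ A) i : ℝ)
    with hσ
  have hfit : ∀ (B : Finset (Fin n)) (i : Fin n), i ∈ B → S B i + a i ≤ ∑ j ∈ B, a j := by
    intro B i hiB
    have hsub : insert i (B.filter (· < i)) ⊆ B := by
      intro x hx
      rcases Finset.mem_insert.1 hx with rfl | hx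
      · exact hiB
      · exact Finset.mem_of_mem_filter x hx
    have hnotin : i ∉ B.filter (· < i) := by
      simp only [Finset.mem_filter]
      rintro ⟨_, h⟩; exact absurd h (lt_irrefl _)
    calc S B i + a i = ∑ j ∈ insert i (B.filter (· < i)), a j := by
          rw [Finset.sum_insert hnotin]; ring
      _ ≤ ∑ j ∈ B, a j := Finset.sum_le_sum_of_subset hsub
  refine ⟨σ, ?_, ?_, ?_⟩
  · intro i
    simp only [hσ]
    split <;> positivity
  · intro i
    simp only [hσ]
    split
    · next h =>
      have := hfit A i h
      rw [hA] at this
      exact_mod_cast by exact_mod_cast this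
    · next h =>
      have := hfit (Finset.univ \ A) i (by simp [h])
      rw [hAc] at this
      exact_mod_cast by exact_mod_cast this
  · intro t ht0 htT
    have htltT : t < T := by
      have : 0 < 1 / (n:ℝ) := by positivity
      linarith
    set c : ℕ := ⌊t⌋.toNat with hc
    have hfl0 : 0 ≤ ⌊t⌋ := Int.floor_nonneg.2 ht0
    have hcr : (c : ℝ) = (⌊t⌋ : ℝ) := by
      simp only [hc]
      exact_mod_cast congrArg (fun z : ℤ => (z:ℝ)) (Int.toNat_of_nonneg hfl0)
    have hct : (c:ℝ) ≤ t := by rw [hcr]; exact Int.floor_le t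
    have htc1 : t < (c:ℝ) + 1 := by rw [hcr]; exact Int.lt_floor_add_one t
    have hcT : c < T := by
      by_contra hge
      push_neg at hge
      have : (T:ℝ) ≤ (c:ℝ) := by exact_mod_cast hge
      linarith
    have cover : ∀ (B : Finset (Fin n)), (∑ j ∈ B, a j = T) →
        ∃ i ∈ B, (S B i : ℝ) ≤ t ∧ t < S B i + a i := by
      intro B hB
      obtain ⟨i, hiB, h1, h2⟩ := ilem n a B c (by omega)
      refine ⟨i, hiB, ?_, ?_⟩
      · calc (S B i : ℝ) ≤ (c:ℝ) := by exact_mod_cast h1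
          _ ≤ t := hct
      · calc t < (c:ℝ) + 1 := htc1
          _ ≤ (S B i : ℝ) + a i := by exact_mod_cast h2
    obtain ⟨i, hiA, hi1, hi2⟩ := cover A hA
    obtain ⟨j, hjB, hj1, hj2⟩ := cover (Finset.univ \ A) hAc
    have hσi : σ i = S A i := by simp only [hσ]; rw [if_pos hiA]
    have hσj : σ j = S (Finset.univ \ A) j := by
      simp only [hσ]
      rw [if_neg (Finset.mem_sdiff.1 hjB).2]
    have hij : i ≠ j := by
      rintro rfl
      exact (Finset.mem_sdiff.1 hjB).2 hiA
    have h1n : 0 < 1 / (n:ℝ) := by positivity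
    have hmi : i ∈ Finset.univ.filter (fun i : Fin n => t < σ i + a i ∧ σ i < t + 1/n) := by
      simp only [Finset.mem_filter, Finset.mem_univ, true_and]
      rw [hσi]
      exact ⟨hi2, by linarith⟩
    have hmj : j ∈ Finset.univ.filter (fun i : Fin n => t < σ i + a i ∧ σ i < t + 1/n) := by
      simp only [Finset.mem_filter, Finset.mem_univ, true_and]
      rw [hσj]
      exact ⟨hj2, by linarith⟩
    exact Finset.one_lt_card.2 ⟨i, hmi, j, hmj, hij⟩

end Pack


namespace NEPf

variable {n : ℕ} {a : Fin n → ℕ} {T : ℕ} {ε : ℝ} {G : Game}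

def jS (hn : G.n = n + 2) (i : Fin n) : Fin G.n := ⟨i, by have := i.isLt; omega⟩
def jB (hn : G.n = n + 2) : Fin G.n := ⟨n, by omega⟩
def jP (hn : G.n = n + 2) : Fin G.n := ⟨n + 1, by omega⟩
def c0 (hc : G.c = 2) : Fin G.c := ⟨0, by omega⟩
def c1 (hc : G.c = 2) : Fin G.c := ⟨1, by omega⟩

section Facts

variable (hn : G.n = n + 2) (hc : G.c = 2) (hT : G.T = (T : ℝ))
  (hcol : ∀ j : Fin G.n, (G.color j : ℕ) = if (j : ℕ) = n + 1 then 1 else 0)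
  (hlen : ∀ j : Fin G.n, G.len j =
      if h : (j : ℕ) < n then (a ⟨(j : ℕ), h⟩ : ℝ)
      else if (j : ℕ) = n then (T : ℝ) else 1 / (n : ℝ))
  (hwt : ∀ j : Fin G.n, G.wt j =
      if (j : ℕ) < n then 1 else if (j : ℕ) = n then 1 + ε else 3)

theorem c0_ne_c1 : c0 hc ≠ c1 hc := by
  simp [c0, c1, Fin.ext_iff]

include hcol in
theorem colS (i : Fin n) : G.color (jS hn i) = c0 hc := by
  have h := hcol (jS hn i)
  have hv : ((jS hn i : Fin G.n) : ℕ) = (i : ℕ) := rfl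
  rw [hv, if_neg (by have := i.isLt; omega)] at h
  exact Fin.ext (by simp [c0, h])

include hcol in
theorem colB : G.color (jB hn) = c0 hc := by
  have h := hcol (jB hn)
  have hv : ((jB hn : Fin G.n) : ℕ) = n := rfl
  rw [hv, if_neg (by omega)] at h
  exact Fin.ext (by simp [c0, h])

include hcol in
theorem colP : G.color (jP hn) = c1 hc := by
  have h := hcol (jP hn)
  have hv : ((jP hn : Fin G.n) : ℕ) = n + 1 := rfl
  rw [hv, if_pos rfl] at h
  exact Fin.ext (by simp [c1, h])

include hlen in
theorem lenS (i : Fin n) : G.len (jS hn i) = (a i : ℝ) := by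
  have h := hlen (jS hn i)
  have hv : ((jS hn i : Fin G.n) : ℕ) = (i : ℕ) := rfl
  rw [hv, dif_pos i.isLt] at h
  simpa using h

include hlen in
theorem lenB : G.len (jB hn) = (T : ℝ) := by
  have h := hlen (jB hn)
  have hv : ((jB hn : Fin G.n) : ℕ) = n := rfl
  rw [hv, dif_neg (by omega), if_pos rfl] at h
  exact h

include hlen in
theorem lenP : G.len (jP hn) = 1 / (n : ℝ) := by
  have h := hlen (jP hn)
  have hv : ((jP hn : Fin G.n) : ℕ) = n + 1 := rfl
  rw [hv, dif_neg (by omega), if_neg (by omega)] at h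
  exact h

include hwt in
theorem wtS (i : Fin n) : G.wt (jS hn i) = 1 := by
  have h := hwt (jS hn i)
  have hv : ((jS hn i : Fin G.n) : ℕ) = (i : ℕ) := rfl
  rw [hv, if_pos i.isLt] at h
  exact h

include hwt in
theorem wtB : G.wt (jB hn) = 1 + ε := by
  have h := hwt (jB hn)
  have hv : ((jB hn : Fin G.n) : ℕ) = n := rfl
  rw [hv, if_neg (by omega), if_pos rfl] at h
  exact h

include hwt in
theorem wtP : G.wt (jP hn) = 3 := by
  have h := hwt (jP hn)
  have hv : ((jP hn : Fin G.n) : ℕ) = n + 1 := rfl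
  rw [hv, if_neg (by omega), if_neg (by omega)] at h
  exact h

theorem sum_split (f : Fin G.n → ℝ) :
    ∑ j, f j = (∑ i : Fin n, f (jS hn i)) + f (jB hn) + f (jP hn) := by
  have h := Fintype.sum_equiv (finCongr hn.symm) (fun x : Fin (n + 2) => f (finCongr hn.symm x))
    f (fun x => rfl)
  rw [← h, Fin.sum_univ_castSucc, Fin.sum_univ_castSucc]
  have e1 : ∀ i : Fin n, finCongr (n := n + 2) (m := G.n) hn.symm
      (Fin.castSucc (Fin.castSucc i)) = jS hn i := fun i => Fin.ext (by simp [jS])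
  have e2 : finCongr (n := n + 2) (m := G.n) hn.symm (Fin.castSucc (Fin.last n)) = jB hn :=
    Fin.ext (by simp [jB])
  have e3 : finCongr (n := n + 2) (m := G.n) hn.symm (Fin.last (n + 1)) = jP hn :=
    Fin.ext (by simp [jP])
  simp only [e1, e2, e3]

include hT hlen in
theorem startB (s : G.Profile) : s.start (jB hn) = 0 := by
  have h1 := s.start_le (jB hn)
  rw [lenB hn hlen, hT] at h1
  have h2 := s.start_nonneg (jB hn)
  linarith

end Facts



noncomputable def Kc {n : ℕ} {G : Game} (a : Fin n → ℕ) (hn : G.n = n + 2) (s : G.Profile) : ℕ :=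
  (Finset.univ.filter (fun i : Fin n =>
    s.start (jP hn) < s.start (jS hn i) + (a i : ℝ) ∧
    s.start (jS hn i) < s.start (jP hn) + 1 / (n : ℝ))).card

section Main

variable (hn : G.n = n + 2) (hc : G.c = 2) (hT : G.T = (T : ℝ))
  (hcol : ∀ j : Fin G.n, (G.color j : ℕ) = if (j : ℕ) = n + 1 then 1 else 0)
  (hlen : ∀ j : Fin G.n, G.len j =
      if h : (j : ℕ) < n then (a ⟨(j : ℕ), h⟩ : ℝ)
      else if (j : ℕ) = n then (T : ℝ) else 1 / (n : ℝ))
  (hwt : ∀ j : Fin G.n, G.wt j =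
      if (j : ℕ) < n then 1 else if (j : ℕ) = n then 1 + ε else 3)
  (hn2 : 2 ≤ n) (hT1 : 1 ≤ T) (hε1 : 0 < ε) (hε2 : ε < 1) (ha1 : ∀ i, 1 ≤ a i)

include hn2 in
theorem invn_pos : (0:ℝ) < 1 / (n:ℝ) := by
  have h : (0:ℝ) < (n:ℝ) := by exact_mod_cast (show 0 < n by omega)
  positivity

-- P2's start lies in the big job's interval and in its own interval
include hc hT hcol hlen hn2 hT1 in
theorem not_cov_both_BP (s : G.Profile) (γ : G.Config)
    (hcB : G.Covered s γ (jB hn)) (hcP : G.Covered s γ (jP hn)) : False := by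
  have h1n := invn_pos (n := n) hn2
  set t0 := s.start (jP hn) with ht0
  have hPfeas := s.start_le (jP hn)
  rw [lenP hn hlen, hT] at hPfeas
  have hP0 := s.start_nonneg (jP hn)
  have hB0 := startB hn hT hlen s
  have e1 : γ t0 = G.color (jB hn) := by
    refine hcB t0 ?_ ?_
    · rw [hB0]; exact hP0
    · rw [hB0, lenB hn hlen, zero_add]
      have hT0 : (0:ℝ) < T := by exact_mod_cast (show 0 < T by omega)
      linarith
  have e2 : γ t0 = G.color (jP hn) := by
    refine hcP t0 ?_ ?_
    · exact le_refl _
    · rw [lenP hn hlen]; linarith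
  rw [e1] at e2
  rw [colB hn hc hcol, colP hn hc hcol] at e2
  exact c0_ne_c1 hc e2

include hc hT hcol hlen hn2 hT1 ha1 in
theorem not_cov_both_SP (s : G.Profile) (γ : G.Config) (i : Fin n)
    (hov : s.start (jP hn) < s.start (jS hn i) + (a i : ℝ) ∧
      s.start (jS hn i) < s.start (jP hn) + 1 / (n : ℝ))
    (hcS : G.Covered s γ (jS hn i)) (hcP : G.Covered s γ (jP hn)) : False := by
  have h1n := invn_pos (n := n) hn2
  have hai : (1:ℝ) ≤ (a i : ℝ) := by exact_mod_cast ha1 i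
  set t0 := max (s.start (jP hn)) (s.start (jS hn i)) with ht0
  have e1 : γ t0 = G.color (jS hn i) := by
    refine hcS t0 (le_max_right _ _) ?_
    rw [lenS hn hlen]
    apply max_lt
    · exact hov.1
    · linarith
  have e2 : γ t0 = G.color (jP hn) := by
    refine hcP t0 (le_max_left _ _) ?_
    rw [lenP hn hlen]
    apply max_lt
    · linarith
    · exact hov.2
  rw [e1] at e2
  rw [colS hn hc hcol, colP hn hc hcol] at e2
  exact c0_ne_c1 hc e2

include hc hT hcol hlen hwt hn2 hT1 hε1 ha1 in
theorem profit_covP (s : G.Profile) (γ : G.Config) (hcP : G.Covered s γ (jP hn)) :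
    G.profit s γ ≤ (n:ℝ) + 3 - (Kc a hn s : ℝ) := by
  unfold Game.profit
  rw [sum_split hn]
  have hB : (if G.Covered s γ (jB hn) then G.wt (jB hn) else 0) = 0 := by
    rw [if_neg]
    intro hcB
    exact not_cov_both_BP hn hc hT hcol hlen hn2 hT1 s γ hcB hcP
  have hP : (if G.Covered s γ (jP hn) then G.wt (jP hn) else 0) ≤ 3 := by
    rw [if_pos hcP, wtP hn hwt]
  have hS : (∑ i : Fin n, if G.Covered s γ (jS hn i) then G.wt (jS hn i) else 0) ≤
      (n:ℝ) - (Kc a hn s : ℝ) := by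
    have hle : ∀ i : Fin n, (if G.Covered s γ (jS hn i) then G.wt (jS hn i) else 0) ≤
        (if s.start (jP hn) < s.start (jS hn i) + (a i : ℝ) ∧
          s.start (jS hn i) < s.start (jP hn) + 1 / (n : ℝ) then 0 else 1) := by
      intro i
      rw [wtS hn hwt]
      by_cases hov : s.start (jP hn) < s.start (jS hn i) + (a i : ℝ) ∧
          s.start (jS hn i) < s.start (jP hn) + 1 / (n : ℝ)
      · rw [if_pos hov, if_neg]
        intro hcS
        exact not_cov_both_SP hn hc hT hcol hlen hn2 hT1 ha1 s γ i hov hcS hcP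
      · rw [if_neg hov]
        split <;> norm_num
    calc (∑ i : Fin n, if G.Covered s γ (jS hn i) then G.wt (jS hn i) else 0)
        ≤ ∑ i : Fin n, (if s.start (jP hn) < s.start (jS hn i) + (a i : ℝ) ∧
            s.start (jS hn i) < s.start (jP hn) + 1 / (n : ℝ) then (0:ℝ) else 1) :=
          Finset.sum_le_sum (fun i _ => hle i)
      _ = (n:ℝ) - (Kc a hn s : ℝ) := by
          have h1 : ∀ i : Fin n, (if s.start (jP hn) < s.start (jS hn i) + (a i : ℝ) ∧
              s.start (jS hn i) < s.start (jP hn) + 1 / (n : ℝ) then (0:ℝ) else 1) =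
              1 - (if s.start (jP hn) < s.start (jS hn i) + (a i : ℝ) ∧
              s.start (jS hn i) < s.start (jP hn) + 1 / (n : ℝ) then (1:ℝ) else 0) := by
            intro i; split <;> norm_num
          rw [Finset.sum_congr rfl (fun i _ => h1 i), Finset.sum_sub_distrib]
          rw [Finset.sum_boole, Finset.sum_const, Finset.card_univ, Fintype.card_fin]
          simp [Kc]
  linarith

include hn hc hT hcol hlen hwt hε1 in
theorem profit_ncovP (s : G.Profile) (γ : G.Config) (hcP : ¬ G.Covered s γ (jP hn)) :
    G.profit s γ ≤ (n:ℝ) + 1 + ε := by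
  unfold Game.profit
  rw [sum_split hn]
  have hB : (if G.Covered s γ (jB hn) then G.wt (jB hn) else 0) ≤ 1 + ε := by
    rw [wtB hn hwt]; split
    · linarith
    · linarith
  have hP : (if G.Covered s γ (jP hn) then G.wt (jP hn) else 0) = 0 := if_neg hcP
  have hS : (∑ i : Fin n, if G.Covered s γ (jS hn i) then G.wt (jS hn i) else 0) ≤ (n:ℝ) := by
    calc (∑ i : Fin n, if G.Covered s γ (jS hn i) then G.wt (jS hn i) else 0)
        ≤ ∑ _i : Fin n, (1:ℝ) :=
          Finset.sum_le_sum (fun i _ => by rw [wtS hn hwt]; split <;> norm_num)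
      _ = (n:ℝ) := by simp
  linarith

include hn hc hT hcol hlen hwt hn2 hε1 in
theorem profit_gamma0 (s : G.Profile) :
    G.profit s (fun _ => c0 hc) = (n:ℝ) + 1 + ε := by
  have h1n := invn_pos (n := n) hn2
  unfold Game.profit
  rw [sum_split hn]
  have hS : ∀ i : Fin n, G.Covered s (fun _ => c0 hc) (jS hn i) := by
    intro i t _ _
    rw [colS hn hc hcol]
  have hB : G.Covered s (fun _ => c0 hc) (jB hn) := by
    intro t _ _
    rw [colB hn hc hcol]
  have hP : ¬ G.Covered s (fun _ => c0 hc) (jP hn) := by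
    intro hcP
    have := hcP (s.start (jP hn)) (le_refl _) (by rw [lenP hn hlen]; linarith)
    rw [colP hn hc hcol] at this
    exact c0_ne_c1 hc this
  rw [if_pos hB, if_neg hP, wtB hn hwt]
  have : (∑ i : Fin n, if G.Covered s (fun _ => c0 hc) (jS hn i)
      then G.wt (jS hn i) else 0) = (n:ℝ) := by
    calc (∑ i : Fin n, if G.Covered s (fun _ => c0 hc) (jS hn i) then G.wt (jS hn i) else 0)
        = ∑ _i : Fin n, (1:ℝ) :=
          Finset.sum_congr rfl (fun i _ => by rw [if_pos (hS i), wtS hn hwt])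
      _ = (n:ℝ) := by simp
  rw [this]
  ring

include hn hc hT hcol hlen hwt hn2 hT1 ha1 in
theorem profit_gamma1 (s : G.Profile) :
    G.profit s (fun t => if s.start (jP hn) ≤ t ∧ t < s.start (jP hn) + 1/(n:ℝ)
      then c1 hc else c0 hc) = (n:ℝ) + 3 - (Kc a hn s : ℝ) := by
  set γ1 : G.Config := fun t => if s.start (jP hn) ≤ t ∧ t < s.start (jP hn) + 1/(n:ℝ)
    then c1 hc else c0 hc with hγ1
  have hP : G.Covered s γ1 (jP hn) := by
    intro t h1 h2
    rw [lenP hn hlen] at h2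
    rw [hγ1]
    simp only []
    rw [if_pos ⟨h1, h2⟩, colP hn hc hcol]
  have hB : ¬ G.Covered s γ1 (jB hn) := by
    intro hcB
    exact not_cov_both_BP hn hc hT hcol hlen hn2 hT1 s γ1 hcB hP
  have hS : ∀ i : Fin n, G.Covered s γ1 (jS hn i) ↔
      ¬ (s.start (jP hn) < s.start (jS hn i) + (a i : ℝ) ∧
        s.start (jS hn i) < s.start (jP hn) + 1 / (n : ℝ)) := by
    intro i
    constructor
    · intro hcS hov
      exact not_cov_both_SP hn hc hT hcol hlen hn2 hT1 ha1 s γ1 i hov hcS hP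
    · intro hov t ht1 ht2
      rw [lenS hn hlen] at ht2
      rw [hγ1]
      simp only []
      rw [if_neg, colS hn hc hcol]
      rintro ⟨hh1, hh2⟩
      apply hov
      constructor
      · linarith
      · linarith
  unfold Game.profit
  rw [sum_split hn]
  rw [if_pos hP, if_neg hB, wtP hn hwt]
  have : (∑ i : Fin n, if G.Covered s γ1 (jS hn i) then G.wt (jS hn i) else 0) =
      (n:ℝ) - (Kc a hn s : ℝ) := by
    calc (∑ i : Fin n, if G.Covered s γ1 (jS hn i) then G.wt (jS hn i) else 0)
        = ∑ i : Fin n, (1 - if s.start (jP hn) < s.start (jS hn i) + (a i : ℝ) ∧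
            s.start (jS hn i) < s.start (jP hn) + 1 / (n : ℝ) then (1:ℝ) else 0) := by
          apply Finset.sum_congr rfl
          intro i _
          rw [wtS hn hwt]
          by_cases hov : s.start (jP hn) < s.start (jS hn i) + (a i : ℝ) ∧
              s.start (jS hn i) < s.start (jP hn) + 1 / (n : ℝ)
          · rw [if_neg, if_pos hov]
            · norm_num
            · rw [hS i]; intro hno; exact hno hov
          · rw [if_pos, if_neg hov]
            · norm_num
            · rw [hS i]; exact fun h => hov h
      _ = (n:ℝ) - (Kc a hn s : ℝ) := by
          rw [Finset.sum_sub_distrib, Finset.sum_boole, Finset.sum_const,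
            Finset.card_univ, Fintype.card_fin]
          simp [Kc]
  rw [this]
  ring

include hn hc hT hcol hlen hwt hn2 hT1 hε1 ha1 in
theorem val_eq (s : G.Profile) :
    G.val s = max ((n:ℝ) + 1 + ε) ((n:ℝ) + 3 - (Kc a hn s : ℝ)) := by
  have hub : ∀ x ∈ {x : ℝ | ∃ γ : G.Config, x = G.profit s γ},
      x ≤ max ((n:ℝ) + 1 + ε) ((n:ℝ) + 3 - (Kc a hn s : ℝ)) := by
    rintro x ⟨γ, rfl⟩
    by_cases hcP : G.Covered s γ (jP hn)
    · exact le_trans (profit_covP hn hc hT hcol hlen hwt hn2 hT1 hε1 ha1 s γ hcP)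
        (le_max_right _ _)
    · exact le_trans (profit_ncovP hn hc hT hcol hlen hwt hε1 s γ hcP) (le_max_left _ _)
  have hbdd : BddAbove {x : ℝ | ∃ γ : G.Config, x = G.profit s γ} := ⟨_, hub⟩
  apply le_antisymm
  · exact csSup_le ⟨_, ⟨fun _ => c0 hc, rfl⟩⟩ hub
  · apply max_le
    · exact le_csSup hbdd ⟨fun _ => c0 hc,
        (profit_gamma0 hn hc hT hcol hlen hwt hn2 hε1 s).symm⟩
    · exact le_csSup hbdd ⟨_, (profit_gamma1 hn hc hT hcol hlen hwt hn2 hT1 ha1 s).symm⟩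

include hn hc hT hcol hlen hwt hn2 hT1 hε1 ha1 in
theorem choice_big (M : G.TieBreak) (s : G.Profile) (h2 : 2 ≤ Kc a hn s) :
    (∀ i : Fin n, G.Covered s (M.choice s) (jS hn i)) ∧ G.Covered s (M.choice s) (jB hn) ∧
      ¬ G.Covered s (M.choice s) (jP hn) := by
  have hval := M.choice_opt s
  rw [val_eq hn hc hT hcol hlen hwt hn2 hT1 hε1 ha1 s] at hval
  have hK : (2:ℝ) ≤ (Kc a hn s : ℝ) := by exact_mod_cast h2
  have hmax : max ((n:ℝ) + 1 + ε) ((n:ℝ) + 3 - (Kc a hn s : ℝ)) = (n:ℝ) + 1 + ε :=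
    max_eq_left (by linarith)
  rw [hmax] at hval
  have hnP : ¬ G.Covered s (M.choice s) (jP hn) := by
    intro hcP
    have := profit_covP hn hc hT hcol hlen hwt hn2 hT1 hε1 ha1 s (M.choice s) hcP
    rw [hval] at this
    linarith
  have hexp := hval
  unfold Game.profit at hexp
  rw [sum_split hn, if_neg hnP] at hexp
  have hBle : (if G.Covered s (M.choice s) (jB hn) then G.wt (jB hn) else 0) ≤ 1 + ε := by
    rw [wtB hn hwt]; split <;> linarith
  have hSle : (∑ i : Fin n, if G.Covered s (M.choice s) (jS hn i)
      then G.wt (jS hn i) else 0) ≤ (n:ℝ) := by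
    calc (∑ i : Fin n, if G.Covered s (M.choice s) (jS hn i) then G.wt (jS hn i) else 0)
        ≤ ∑ _i : Fin n, (1:ℝ) :=
          Finset.sum_le_sum (fun i _ => by rw [wtS hn hwt]; split <;> norm_num)
      _ = (n:ℝ) := by simp
  have hSeq : (∑ i : Fin n, if G.Covered s (M.choice s) (jS hn i)
      then G.wt (jS hn i) else 0) = (n:ℝ) := by linarith
  have hBeq : (if G.Covered s (M.choice s) (jB hn) then G.wt (jB hn) else 0) = 1 + ε := by
    linarith
  refine ⟨?_, ?_, hnP⟩
  · have hSeq' : (∑ i : Fin n, if G.Covered s (M.choice s) (jS hn i)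
        then (1:ℝ) else 0) = (n:ℝ) := by
      rw [← hSeq]
      exact Finset.sum_congr rfl (fun i _ => by rw [wtS hn hwt])
    rw [Finset.sum_boole] at hSeq'
    have hcard : (Finset.univ.filter
        (fun i : Fin n => G.Covered s (M.choice s) (jS hn i))).card = n := by
      exact_mod_cast hSeq'
    have huniv : (Finset.univ.filter
        (fun i : Fin n => G.Covered s (M.choice s) (jS hn i))) = Finset.univ := by
      apply Finset.eq_univ_of_card
      rw [hcard, Fintype.card_fin]
    intro i
    have : i ∈ Finset.univ.filter
        (fun i : Fin n => G.Covered s (M.choice s) (jS hn i)) := by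
      rw [huniv]; exact Finset.mem_univ i
    exact (Finset.mem_filter.1 this).2
  · by_contra hnB
    rw [if_neg hnB] at hBeq
    linarith

include hn hc hT hcol hlen hwt hn2 hT1 hε1 ha1 in
theorem util_big (M : G.TieBreak) (s : G.Profile) (h2 : 2 ≤ Kc a hn s) :
    G.utility M (c0 hc) s = (n:ℝ) + 1 + ε ∧ G.utility M (c1 hc) s = 0 := by
  obtain ⟨hS, hB, hnP⟩ := choice_big hn hc hT hcol hlen hwt hn2 hT1 hε1 ha1 M s h2
  constructor
  · unfold Game.utility
    rw [sum_split hn]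
    rw [if_pos ⟨colB hn hc hcol, hB⟩, wtB hn hwt]
    rw [if_neg (fun h => c0_ne_c1 hc ((colP hn hc hcol ▸ h.1 : c1 hc = c0 hc)).symm)]
    have : (∑ i : Fin n, if G.color (jS hn i) = c0 hc ∧ G.Covered s (M.choice s) (jS hn i)
        then G.wt (jS hn i) else 0) = (n:ℝ) := by
      calc (∑ i : Fin n, if G.color (jS hn i) = c0 hc ∧ G.Covered s (M.choice s) (jS hn i)
          then G.wt (jS hn i) else 0)
          = ∑ _i : Fin n, (1:ℝ) := Finset.sum_congr rfl (fun i _ => by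
            rw [if_pos ⟨colS hn hc hcol i, hS i⟩, wtS hn hwt])
        _ = (n:ℝ) := by simp
    rw [this]
    ring
  · unfold Game.utility
    rw [sum_split hn]
    rw [if_neg (fun h => c0_ne_c1 hc (colB hn hc hcol ▸ h.1 : c0 hc = c1 hc))]
    rw [if_neg (fun h => hnP h.2)]
    have : (∑ i : Fin n, if G.color (jS hn i) = c1 hc ∧ G.Covered s (M.choice s) (jS hn i)
        then G.wt (jS hn i) else 0) = 0 := by
      apply Finset.sum_eq_zero
      intro i _
      rw [if_neg (fun h => c0_ne_c1 hc (colS hn hc hcol i ▸ h.1 : c0 hc = c1 hc))]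
    rw [this]
    ring

include hn hc hT hcol hlen hwt hn2 hT1 hε1 hε2 ha1 in
theorem choice_small (M : G.TieBreak) (s : G.Profile) (h1 : Kc a hn s ≤ 1) :
    G.Covered s (M.choice s) (jP hn) := by
  have hval := M.choice_opt s
  rw [val_eq hn hc hT hcol hlen hwt hn2 hT1 hε1 ha1 s] at hval
  have hK : (Kc a hn s : ℝ) ≤ 1 := by exact_mod_cast h1
  have hmax : max ((n:ℝ) + 1 + ε) ((n:ℝ) + 3 - (Kc a hn s : ℝ)) =
      (n:ℝ) + 3 - (Kc a hn s : ℝ) := max_eq_right (by linarith)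
  rw [hmax] at hval
  by_contra hnP
  have := profit_ncovP hn hc hT hcol hlen hwt hε1 s (M.choice s) hnP
  rw [hval] at this
  linarith

include hn hc hT hcol hlen hwt hn2 hT1 hε1 hε2 ha1 in
theorem util_small (M : G.TieBreak) (s : G.Profile) (h1 : Kc a hn s ≤ 1) :
    G.utility M (c1 hc) s = 3 ∧ G.utility M (c0 hc) s ≤ (n:ℝ) := by
  have hcP := choice_small hn hc hT hcol hlen hwt hn2 hT1 hε1 hε2 ha1 M s h1
  have hnB : ¬ G.Covered s (M.choice s) (jB hn) :=
    fun hcB => not_cov_both_BP hn hc hT hcol hlen hn2 hT1 s (M.choice s) hcB hcP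
  constructor
  · unfold Game.utility
    rw [sum_split hn]
    rw [if_neg (fun h => c0_ne_c1 hc (colB hn hc hcol ▸ h.1 : c0 hc = c1 hc))]
    rw [if_pos ⟨colP hn hc hcol, hcP⟩, wtP hn hwt]
    have : (∑ i : Fin n, if G.color (jS hn i) = c1 hc ∧ G.Covered s (M.choice s) (jS hn i)
        then G.wt (jS hn i) else 0) = 0 := by
      apply Finset.sum_eq_zero
      intro i _
      rw [if_neg (fun h => c0_ne_c1 hc (colS hn hc hcol i ▸ h.1 : c0 hc = c1 hc))]
    rw [this]
    ring
  · unfold Game.utility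
    rw [sum_split hn]
    rw [if_neg (fun h => hnB h.2)]
    rw [if_neg (fun h => c0_ne_c1 hc ((colP hn hc hcol ▸ h.1 : c1 hc = c0 hc)).symm)]
    have : (∑ i : Fin n, if G.color (jS hn i) = c0 hc ∧ G.Covered s (M.choice s) (jS hn i)
        then G.wt (jS hn i) else 0) ≤ (n:ℝ) := by
      calc (∑ i : Fin n, if G.color (jS hn i) = c0 hc ∧ G.Covered s (M.choice s) (jS hn i)
          then G.wt (jS hn i) else 0)
          ≤ ∑ _i : Fin n, (1:ℝ) :=
            Finset.sum_le_sum (fun i _ => by rw [wtS hn hwt]; split <;> norm_num)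
        _ = (n:ℝ) := by simp
    linarith

include hn hc hT hcol hlen hwt hε1 in
theorem util_c0_le (M : G.TieBreak) (s : G.Profile) :
    G.utility M (c0 hc) s ≤ (n:ℝ) + 1 + ε := by
  unfold Game.utility
  rw [sum_split hn]
  have h1 : (if G.color (jB hn) = c0 hc ∧ G.Covered s (M.choice s) (jB hn)
      then G.wt (jB hn) else 0) ≤ 1 + ε := by
    rw [wtB hn hwt]; split <;> linarith
  have h2 : (if G.color (jP hn) = c0 hc ∧ G.Covered s (M.choice s) (jP hn)
      then G.wt (jP hn) else 0) = 0 :=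
    if_neg (fun h => c0_ne_c1 hc ((colP hn hc hcol ▸ h.1 : c1 hc = c0 hc)).symm)
  have h3 : (∑ i : Fin n, if G.color (jS hn i) = c0 hc ∧ G.Covered s (M.choice s) (jS hn i)
      then G.wt (jS hn i) else 0) ≤ (n:ℝ) := by
    calc (∑ i : Fin n, if G.color (jS hn i) = c0 hc ∧ G.Covered s (M.choice s) (jS hn i)
        then G.wt (jS hn i) else 0)
        ≤ ∑ _i : Fin n, (1:ℝ) :=
          Finset.sum_le_sum (fun i _ => by rw [wtS hn hwt]; split <;> norm_num)
      _ = (n:ℝ) := by simp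
  linarith

variable (haT : ∀ i, a i ≤ T)

include hn hc hT hcol hlen hwt hn2 hT1 hε1 hε2 ha1 haT in
theorem ne_to_blocking (M : G.TieBreak) (s : G.Profile) (hNE : G.IsNE M s) :
    ∀ t : ℝ, 0 ≤ t → t + 1 / n ≤ T →
      2 ≤ (Finset.univ.filter (fun i : Fin n =>
        t < s.start (jS hn i) + (a i : ℝ) ∧ s.start (jS hn i) < t + 1 / (n : ℝ))).card := by
  have h1n := invn_pos (n := n) hn2
  -- Step 1 : in a NE the P2 job is blocked at its current position
  have hK2 : 2 ≤ Kc a hn s := by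
    by_contra hlt
    push_neg at hlt
    have hK1 : Kc a hn s ≤ 1 := by omega
    set i0 : Fin n := ⟨0, by omega⟩ with hi0
    set i1 : Fin n := ⟨1, by omega⟩ with hi1
    set s2 := s.start (jP hn) with hs2
    have hs2nn : 0 ≤ s2 := s.start_nonneg _
    have hs2le : s2 + 1 / (n:ℝ) ≤ (T:ℝ) := by
      have := s.start_le (jP hn)
      rw [lenP hn hlen, hT] at this
      exact this
    set st1 : Fin G.n → ℝ := fun j =>
      if (j:ℕ) = n + 1 then s2
      else if (j:ℕ) = 0 then min s2 ((T:ℝ) - (a i0 : ℝ))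
      else if (j:ℕ) = 1 then min s2 ((T:ℝ) - (a i1 : ℝ))
      else 0 with hst1
    have haT0 : (0:ℝ) ≤ (T:ℝ) - (a i0 : ℝ) := by
      have := haT i0; have : (a i0 : ℝ) ≤ (T:ℝ) := by exact_mod_cast haT i0
      linarith
    have haT1 : (0:ℝ) ≤ (T:ℝ) - (a i1 : ℝ) := by
      have : (a i1 : ℝ) ≤ (T:ℝ) := by exact_mod_cast haT i1
      linarith
    set s1 : G.Profile := ⟨st1, by
        intro j
        rw [hst1]
        simp only []
        split
        · exact hs2nn
        · split
          · exact le_min hs2nn haT0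
          · split
            · exact le_min hs2nn haT1
            · exact le_refl 0, by
        intro j
        rw [hst1]
        simp only []
        split
        · next h =>
          have hj : j = jP hn := Fin.ext h
          rw [hj]
          exact s.start_le (jP hn)
        · split
          · next h2 h =>
            have hj : j = jS hn i0 := Fin.ext h
            rw [hj, lenS hn hlen, hT]
            have := min_le_right s2 ((T:ℝ) - (a i0 : ℝ))
            linarith
          · split
            · next h2 h3 h =>
              have hj : j = jS hn i1 := Fin.ext h
              rw [hj, lenS hn hlen, hT]
              have := min_le_right s2 ((T:ℝ) - (a i1 : ℝ))
              linarith
            · have := G.len_le_T j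
              rw [hT] at this
              rw [hT]
              linarith⟩ with hs1
    have hfix : ∀ j, G.color j ≠ c0 hc → s1.start j = s.start j := by
      intro j hcolj
      have hval : (j:ℕ) = n + 1 := by
        by_contra hne
        apply hcolj
        apply Fin.ext
        have := hcol j
        rw [if_neg hne] at this
        simp [c0, this]
      have hj : j = jP hn := Fin.ext hval
      rw [hj]
      show st1 (jP hn) = _
      rw [hst1]
      simp only []
      rw [if_pos (show ((jP hn : Fin G.n) : ℕ) = n + 1 from rfl)]
    have hP1 : s1.start (jP hn) = s2 := by
      show st1 (jP hn) = s2
      rw [hst1]; simp only []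
      rw [if_pos (show ((jP hn : Fin G.n) : ℕ) = n + 1 from rfl)]
    have hS0 : s1.start (jS hn i0) = min s2 ((T:ℝ) - (a i0 : ℝ)) := by
      show st1 (jS hn i0) = _
      rw [hst1]; simp only []
      rw [if_neg (show ¬ ((jS hn i0 : Fin G.n) : ℕ) = n + 1 by
        show ¬ (0 : ℕ) = n + 1; omega)]
      rw [if_pos (show ((jS hn i0 : Fin G.n) : ℕ) = 0 from rfl)]
    have hS1 : s1.start (jS hn i1) = min s2 ((T:ℝ) - (a i1 : ℝ)) := by
      show st1 (jS hn i1) = _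
      rw [hst1]; simp only []
      rw [if_neg (show ¬ ((jS hn i1 : Fin G.n) : ℕ) = n + 1 by
        show ¬ (1 : ℕ) = n + 1; omega)]
      rw [if_neg (show ¬ ((jS hn i1 : Fin G.n) : ℕ) = 0 by
        show ¬ (1 : ℕ) = 0; omega)]
      rw [if_pos (show ((jS hn i1 : Fin G.n) : ℕ) = 1 from rfl)]
    have hKs1 : 2 ≤ Kc a hn s1 := by
      have hov : ∀ i : Fin n, s1.start (jS hn i) = min s2 ((T:ℝ) - (a i : ℝ)) →
          s1.start (jP hn) < s1.start (jS hn i) + (a i : ℝ) ∧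
          s1.start (jS hn i) < s1.start (jP hn) + 1 / (n : ℝ) := by
        intro i hsi
        have hai : (1:ℝ) ≤ (a i : ℝ) := by exact_mod_cast ha1 i
        rw [hsi, hP1]
        constructor
        · rcases le_total s2 ((T:ℝ) - (a i : ℝ)) with hcase | hcase
          · rw [min_eq_left hcase]; linarith
          · rw [min_eq_right hcase]; linarith
        · have := min_le_left s2 ((T:ℝ) - (a i : ℝ))
          linarith
      have hm0 : i0 ∈ Finset.univ.filter (fun i : Fin n =>
          s1.start (jP hn) < s1.start (jS hn i) + (a i : ℝ) ∧
          s1.start (jS hn i) < s1.start (jP hn) + 1 / (n : ℝ)) := by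
        rw [Finset.mem_filter]
        exact ⟨Finset.mem_univ _, hov i0 hS0⟩
      have hm1 : i1 ∈ Finset.univ.filter (fun i : Fin n =>
          s1.start (jP hn) < s1.start (jS hn i) + (a i : ℝ) ∧
          s1.start (jS hn i) < s1.start (jP hn) + 1 / (n : ℝ)) := by
        rw [Finset.mem_filter]
        exact ⟨Finset.mem_univ _, hov i1 hS1⟩
      have hne : i0 ≠ i1 := by
        rw [hi0, hi1]
        intro h
        have := congrArg Fin.val h
        simp at this
      exact Finset.one_lt_card.2 ⟨i0, hm0, i1, hm1, hne⟩
    have hu1 := (util_big hn hc hT hcol hlen hwt hn2 hT1 hε1 ha1 M s1 hKs1).1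
    have hu0 := (util_small hn hc hT hcol hlen hwt hn2 hT1 hε1 hε2 ha1 M s hK1).2
    have := hNE (c0 hc) s1 hfix
    rw [hu1] at this
    linarith
  -- Step 2 : every alternative position of P2 is blocked
  intro t ht0 htle
  by_contra hlt
  push_neg at hlt
  set st2 : Fin G.n → ℝ := Function.update s.start (jP hn) t with hst2
  have hjPne : ∀ i : Fin n, jS hn i ≠ jP hn := by
    intro i h
    have := congrArg Fin.val h
    simp only [jS, jP] at this
    omega
  set s2p : G.Profile := ⟨st2, by
      intro j
      rw [hst2]
      by_cases hj : j = jP hn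
      · rw [hj, Function.update_self]; exact ht0
      · rw [Function.update_of_ne hj]; exact s.start_nonneg j, by
      intro j
      rw [hst2]
      by_cases hj : j = jP hn
      · rw [hj, Function.update_self, lenP hn hlen, hT]; exact htle
      · rw [Function.update_of_ne hj]; exact s.start_le j⟩ with hs2p
  have hstart_eq : ∀ i : Fin n, s2p.start (jS hn i) = s.start (jS hn i) := by
    intro i
    show st2 (jS hn i) = _
    rw [hst2, Function.update_of_ne (hjPne i)]
  have hstartP : s2p.start (jP hn) = t := by
    show st2 (jP hn) = t
    rw [hst2, Function.update_self]
  have hKs2 : Kc a hn s2p ≤ 1 := by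
    unfold Kc
    have : (Finset.univ.filter (fun i : Fin n =>
        s2p.start (jP hn) < s2p.start (jS hn i) + (a i : ℝ) ∧
        s2p.start (jS hn i) < s2p.start (jP hn) + 1 / (n : ℝ))) =
        (Finset.univ.filter (fun i : Fin n =>
        t < s.start (jS hn i) + (a i : ℝ) ∧ s.start (jS hn i) < t + 1 / (n : ℝ))) := by
      apply Finset.filter_congr
      intro i _
      rw [hstart_eq i, hstartP]
    rw [this]
    omega
  have hfix : ∀ j, G.color j ≠ c1 hc → s2p.start j = s.start j := by
    intro j hcolj
    have hj : j ≠ jP hn := by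
      intro h
      exact hcolj (h ▸ colP hn hc hcol)
    show st2 j = _
    rw [hst2, Function.update_of_ne hj]
  have hu1 := (util_small hn hc hT hcol hlen hwt hn2 hT1 hε1 hε2 ha1 M s2p hKs2).1
  have hu0 := (util_big hn hc hT hcol hlen hwt hn2 hT1 hε1 ha1 M s hK2).2
  have := hNE (c1 hc) s2p hfix
  rw [hu1, hu0] at this
  linarith

include hn hc hT hcol hlen hwt hn2 hT1 hε1 ha1 in
theorem blocking_to_ne (M : G.TieBreak) (σ : Fin n → ℝ)
    (hσ0 : ∀ i, 0 ≤ σ i) (hσT : ∀ i, σ i + (a i : ℝ) ≤ (T:ℝ))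
    (hblock : ∀ t : ℝ, 0 ≤ t → t + 1 / n ≤ T →
      2 ≤ (Finset.univ.filter (fun i : Fin n =>
        t < σ i + (a i : ℝ) ∧ σ i < t + 1 / (n : ℝ))).card) :
    ∃ s : G.Profile, G.IsNE M s := by
  have h1n := invn_pos (n := n) hn2
  have hnR : (0:ℝ) < (n:ℝ) := by exact_mod_cast (show 0 < n by omega)
  have hinv1 : 1 / (n:ℝ) ≤ (T:ℝ) := by
    have h1 : 1 / (n:ℝ) ≤ 1 := by
      rw [div_le_one hnR]
      exact_mod_cast (show 1 ≤ n by omega)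
    have h2 : (1:ℝ) ≤ (T:ℝ) := by exact_mod_cast hT1
    linarith
  set st : Fin G.n → ℝ := fun j => if h : (j:ℕ) < n then σ ⟨(j:ℕ), h⟩ else 0 with hst
  set s0 : G.Profile := ⟨st, by
      intro j
      rw [hst]
      simp only []
      split
      · exact hσ0 _
      · exact le_refl 0, by
      intro j
      rw [hst]
      simp only []
      split
      · next h =>
        have hl := hlen j
        rw [dif_pos h] at hl
        rw [hl, hT]
        exact hσT _
      · have := G.len_le_T j
        rw [hT] at this
        rw [hT]
        linarith⟩ with hs0
  have hstS : ∀ i : Fin n, s0.start (jS hn i) = σ i := by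
    intro i
    show st (jS hn i) = σ i
    rw [hst]
    simp only []
    rw [dif_pos (show ((jS hn i : Fin G.n) : ℕ) < n from i.isLt)]
    exact congrArg σ (Fin.ext rfl)
  have hstP : s0.start (jP hn) = 0 := by
    show st (jP hn) = 0
    rw [hst]
    simp only []
    rw [dif_neg (show ¬ ((jP hn : Fin G.n) : ℕ) < n by show ¬ n + 1 < n; omega)]
  have hKs0 : 2 ≤ Kc a hn s0 := by
    unfold Kc
    have heq : (Finset.univ.filter (fun i : Fin n =>
        s0.start (jP hn) < s0.start (jS hn i) + (a i : ℝ) ∧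
        s0.start (jS hn i) < s0.start (jP hn) + 1 / (n : ℝ))) =
        (Finset.univ.filter (fun i : Fin n =>
        (0:ℝ) < σ i + (a i : ℝ) ∧ σ i < 0 + 1 / (n : ℝ))) := by
      apply Finset.filter_congr
      intro i _
      rw [hstS i, hstP]
    rw [heq]
    exact hblock 0 (le_refl 0) (by rw [zero_add]; exact hinv1)
  refine ⟨s0, ?_⟩
  intro i s' hfix
  have hival : (i : ℕ) < 2 := by
    have := i.isLt
    omega
  rcases (show (i:ℕ) = 0 ∨ (i:ℕ) = 1 by omega) with h0 | h1
  · -- player 1 cannot improve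
    have hi : i = c0 hc := Fin.ext h0
    rw [hi]
    rw [(util_big hn hc hT hcol hlen hwt hn2 hT1 hε1 ha1 M s0 hKs0).1]
    exact util_c0_le hn hc hT hcol hlen hwt hε1 M s'
  · -- player 2 cannot improve
    have hi : i = c1 hc := Fin.ext h1
    rw [hi] at hfix ⊢
    have hfixS : ∀ i : Fin n, s'.start (jS hn i) = σ i := by
      intro i'
      rw [← hstS i']
      apply hfix
      rw [colS hn hc hcol]
      exact c0_ne_c1 hc
    have hKs' : 2 ≤ Kc a hn s' := by
      unfold Kc
      set t' := s'.start (jP hn) with ht'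
      have heq : (Finset.univ.filter (fun i : Fin n =>
          s'.start (jP hn) < s'.start (jS hn i) + (a i : ℝ) ∧
          s'.start (jS hn i) < s'.start (jP hn) + 1 / (n : ℝ))) =
          (Finset.univ.filter (fun i : Fin n =>
          t' < σ i + (a i : ℝ) ∧ σ i < t' + 1 / (n : ℝ))) := by
        apply Finset.filter_congr
        intro i' _
        rw [hfixS i']
      rw [heq]
      apply hblock t' (s'.start_nonneg _)
      have := s'.start_le (jP hn)
      rw [lenP hn hlen, hT] at this
      exact this
    rw [(util_big hn hc hT hcol hlen hwt hn2 hT1 hε1 ha1 M s0 hKs0).2,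
      (util_big hn hc hT hcol hlen hwt hn2 hT1 hε1 ha1 M s' hKs').2]

end Main

end NEPf


/-- Reduction from Partition: the 2-color game with horizon `T`, in which player 1
has jobs of lengths `a 1, …, a n` (weight 1 each) and one job of length `T`
(weight `1 + ε`), and player 2 has one job of length `1/n` and weight `3`, has a
Nash equilibrium with respect to any tie-breaking rule iff a subset of the `a i`
sums to `T`. -/
theorem NE_iff_partition (n : ℕ) (a : Fin n → ℕ) (ha : ∀ i, 0 < a i) (T : ℕ)
    (hsum : ∑ i, a i = 2 * T) (haT : ∀ i, a i ≤ T)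
    (ε : ℝ) (hε1 : 0 < ε) (hε2 : ε < 1)
    (G : Game) (hn : G.n = n + 2) (hc : G.c = 2) (hT : G.T = (T : ℝ))
    (hcol : ∀ j : Fin G.n, (G.color j : ℕ) = if (j : ℕ) = n + 1 then 1 else 0)
    (hlen : ∀ j : Fin G.n, G.len j =
      if h : (j : ℕ) < n then (a ⟨(j : ℕ), h⟩ : ℝ)
      else if (j : ℕ) = n then (T : ℝ) else 1 / (n : ℝ))
    (hwt : ∀ j : Fin G.n, G.wt j =
      if (j : ℕ) < n then 1 else if (j : ℕ) = n then 1 + ε else 3) :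
    ∀ M : G.TieBreak,
      ((∃ s : G.Profile, G.IsNE M s) ↔ ∃ A : Finset (Fin n), ∑ i ∈ A, a i = T) := by
  intro M
  have hTpos : (0:ℝ) < (T:ℝ) := hT ▸ G.T_pos
  have hT1 : 1 ≤ T := by
    have : 0 < T := by exact_mod_cast hTpos
    omega
  have ha1 : ∀ i, 1 ≤ a i := fun i => ha i
  have hn2 : 2 ≤ n := by
    by_contra h
    push_neg at h
    rcases (show n = 0 ∨ n = 1 by omega) with rfl | rfl
    · simp at hsum
      omega
    · have h1 : ∑ i : Fin 1, a i = a 0 := by simp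
      rw [h1] at hsum
      have := haT 0
      omega
  constructor
  · rintro ⟨s, hNE⟩
    have hblock := NEPf.ne_to_blocking hn hc hT hcol hlen hwt hn2 hT1 hε1 hε2 ha1 haT M s hNE
    exact comb_lemma n T hn2 hT1 a ha1 hsum (fun i => s.start (NEPf.jS hn i))
      (fun i => s.start_nonneg _)
      (fun i => by
        have h := s.start_le (NEPf.jS hn i)
        rw [NEPf.lenS hn hlen, hT] at h
        exact h)
      hblock
  · rintro ⟨A, hA⟩
    obtain ⟨σ, h1, h2, h3⟩ := pack_lemma n T hn2 hT1 a ha1 hsum A hA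
    exact NEPf.blocking_to_ne hn hc hT hcol hlen hwt hn2 hT1 hε1 ha1 M σ h1 h2 h3
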